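/- Let N be a rooted binary phylogenetic network containing an N-fence of length at least 3, i.e., a maximal zig-zag trail (a_1,...,a_k) with k odd and tail(a_1) a reticulation. Then in every cherry cover of N, for each even index 2j with 1 ≤ j ≤ (k-1)/2, the arcs a_{2j} and a_{2j+1} are covered by a common reticulation cherry shape. -/

import Mathlib

/-- A directed graph with a distinguished root, modelling a phylogenetic network. -/
structure Net (V : Type*) where
  verts : Set V
  root : V
  arcs : Set (V × V)

namespace Net

variable {V : Type*}

/-- In-degree of a vertex. -/
noncomputable def indeg (N : Net V) (v : V) : ℕ := {a ∈ N.arcs | a.2 = v}.ncard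

/-- Out-degree of a vertex. -/
noncomputable def outdeg (N : Net V) (v : V) : ℕ := {a ∈ N.arcs | a.1 = v}.ncard

/-- A leaf: indegree 1, outdegree 0. -/
def IsLeafV (N : Net V) (v : V) : Prop := v ∈ N.verts ∧ N.indeg v = 1 ∧ N.outdeg v = 0

/-- A tree vertex: indegree 1, outdegree 2. -/
def IsTreeV (N : Net V) (v : V) : Prop := v ∈ N.verts ∧ N.indeg v = 1 ∧ N.outdeg v = 2

/-- A reticulation: indegree 2, outdegree 1. -/
def IsReticV (N : Net V) (v : V) : Prop := v ∈ N.verts ∧ N.indeg v = 2 ∧ N.outdeg v = 1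

/-- The arc relation of the network. -/
def arcRel (N : Net V) (u w : V) : Prop := (u, w) ∈ N.arcs

/-- `N` is a rooted binary phylogenetic network. -/
def IsPhylo (N : Net V) : Prop :=
  N.verts.Finite ∧ N.arcs.Finite ∧ N.root ∈ N.verts ∧
  (∀ a ∈ N.arcs, a.1 ∈ N.verts ∧ a.2 ∈ N.verts) ∧
  N.indeg N.root = 0 ∧ N.outdeg N.root = 1 ∧
  (∀ v ∈ N.verts, v = N.root ∨ N.IsTreeV v ∨ N.IsReticV v ∨ N.IsLeafV v) ∧
  (∀ v : V, ¬ Relation.TransGen N.arcRel v v)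

end Net

open Net
/-- A cherry shape `cherry p x y` (arcs `px, py`) or a reticulation cherry shape
`retic px py x y` (arcs `p_x x, p_y p_x, p_y y`). -/
inductive Shape (V : Type*) where
  | cherry (p x y : V)
  | retic (px py x y : V)

namespace Shape

variable {V : Type*}

/-- The arcs covered by a shape. -/
def shapeArcs : Shape V → Set (V × V)
  | .cherry p x y => {(p, x), (p, y)}
  | .retic px py x y => {(px, x), (py, px), (py, y)}

/-- The endpoints of a shape. -/
def endpoints : Shape V → Set V
  | .cherry _ x y => {x, y}
  | .retic _ _ x y => {x, y}

/-- The internal vertices of a shape. -/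
def internals : Shape V → Set V
  | .cherry p _ _ => {p}
  | .retic px py _ _ => {px, py}

/-- Whether the shape is a reticulation cherry shape. -/
def IsReticShape : Shape V → Prop
  | .cherry _ _ _ => False
  | .retic _ _ _ _ => True

/-- Validity of a shape inside a network `N`: its arcs are pairwise distinct and
the distinguished vertex `p_x` of a reticulation cherry shape is a reticulation. -/
def IsValid (N : Net V) : Shape V → Prop
  | .cherry _ x y => x ≠ y
  | .retic px py x y => N.IsReticV px ∧ px ≠ py ∧ px ≠ y ∧ x ≠ y

end Shape

namespace Net

variable {V : Type*}

/-- A cherry cover of `N`: a collection of valid cherry shapes and reticulation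
cherry shapes such that every arc of `N` except the root arc is covered exactly
once, and the root arc is covered by no shape. -/
def IsCherryCover (N : Net V) (P : Set (Shape V)) : Prop :=
  (∀ S ∈ P, S.shapeArcs ⊆ N.arcs ∧ S.IsValid N) ∧
  (∀ a ∈ N.arcs, a.1 ≠ N.root → ∃! S : Shape V, S ∈ P ∧ a ∈ S.shapeArcs) ∧
  (∀ S ∈ P, ∀ a ∈ S.shapeArcs, a.1 ≠ N.root)

/-- The arc relation of the cherry covering auxiliary graph of `P`:
there is an arc from `B` to `B'` if an internal vertex of `B'` is an endpoint of `B`. -/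
def AuxRel (P : Set (Shape V)) (B B' : Shape V) : Prop :=
  B ∈ P ∧ B' ∈ P ∧ ∃ w ∈ B'.internals, w ∈ B.endpoints

/-- A cherry cover is acyclic if its auxiliary graph has no directed cycle. -/
def AuxAcyclic (P : Set (Shape V)) : Prop :=
  ∀ B : Shape V, ¬ Relation.TransGen (AuxRel P) B B

end Net
namespace Net

variable {V : Type*}

/-- A zig-zag trail in the arc set `A`: a nonempty sequence of distinct arcs of `A`
in which consecutive arcs share a tail or share a head. -/
def IsZigZag (A : Set (V × V)) (l : List (V × V)) : Prop :=
  l ≠ [] ∧ l.Nodup ∧ (∀ a ∈ l, a ∈ A) ∧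
    l.Chain' (fun a b => a.1 = b.1 ∨ a.2 = b.2)

/-- A maximal zig-zag trail: not properly contained (as an infix, up to reversal)
in any longer zig-zag trail in `A`. -/
def IsMaximalZigZag (A : Set (V × V)) (l : List (V × V)) : Prop :=
  IsZigZag A l ∧
    ∀ l' : List (V × V), IsZigZag A l' → (l <:+: l' ∨ l <:+: l'.reverse) →
      l'.length = l.length

/-- The non-root arcs of `N`. -/
def nonRootArcs (N : Net V) : Set (V × V) := {a ∈ N.arcs | a.1 ≠ N.root}

/-- A zig-zag decomposition: a partition of all non-root arcs of `N` into
(arc sets of) maximal zig-zag trails. -/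
def IsZigZagDecomp (N : Net V) (D : Set (Set (V × V))) : Prop :=
  (∀ B ∈ D, ∃ l : List (V × V),
      IsMaximalZigZag N.nonRootArcs l ∧ {a | a ∈ l} = B) ∧
  (∀ B ∈ D, ∀ B' ∈ D, B ≠ B' → Disjoint B B') ∧
  (∀ B ∈ D, B.Nonempty) ∧
  ⋃₀ D = N.nonRootArcs

/-- A crown: even length at least 4, closing up (first and last arcs share
a tail or share a head). -/
def IsCrown (l : List (V × V)) : Prop :=
  4 ≤ l.length ∧ Even l.length ∧
    ∃ a b : V × V, l.head? = some a ∧ l.getLast? = some b ∧ (a.1 = b.1 ∨ a.2 = b.2)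

/-- An M-fence: even length at least 2, not a crown, both end tails tree vertices. -/
def IsMFence (N : Net V) (l : List (V × V)) : Prop :=
  2 ≤ l.length ∧ Even l.length ∧ ¬ IsCrown l ∧
    ∃ a b : V × V, l.head? = some a ∧ l.getLast? = some b ∧
      N.IsTreeV a.1 ∧ N.IsTreeV b.1

/-- An N-fence: odd length, exactly one of the two end tails is a reticulation. -/
def IsNFence (N : Net V) (l : List (V × V)) : Prop :=
  Odd l.length ∧
    ∃ a b : V × V, l.head? = some a ∧ l.getLast? = some b ∧
      ((N.IsReticV a.1 ∧ ¬ N.IsReticV b.1) ∨ (¬ N.IsReticV a.1 ∧ N.IsReticV b.1))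

/-- A W-fence: even length at least 2, both end tails reticulations. -/
def IsWFence (N : Net V) (l : List (V × V)) : Prop :=
  2 ≤ l.length ∧ Even l.length ∧
    ∃ a b : V × V, l.head? = some a ∧ l.getLast? = some b ∧
      N.IsReticV a.1 ∧ N.IsReticV b.1

end Net

/-- In every cherry cover of a network containing an N-fence `(a_1,…,a_k)` of
length at least 3 (k odd, tail of `a_1` a reticulation), for each even index
`2j` the arcs `a_{2j}` and `a_{2j+1}` are covered by a common reticulation
cherry shape. -/
theorem nfence_cover_structure {V : Type*} (N : Net V) (hN : N.IsPhylo)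
    (P : Set (Shape V)) (hP : N.IsCherryCover P)
    (l : List (V × V)) (hl : Net.IsMaximalZigZag N.nonRootArcs l)
    (hodd : Odd l.length) (hlen : 3 ≤ l.length)
    (hfirst : ∃ a : V × V, l.head? = some a ∧ N.IsReticV a.1) :
    ∀ j : ℕ, 1 ≤ j → ∀ hj : 2 * j + 1 ≤ l.length,
      ∃ S : Shape V, S ∈ P ∧ S.IsReticShape ∧
        l.get ⟨2 * j - 1, by omega⟩ ∈ S.shapeArcs ∧
        l.get ⟨2 * j, by omega⟩ ∈ S.shapeArcs := by
  classical
  obtain ⟨hvfin, hafin, hrv, hends, hrin, hrout, hclass, hacyc⟩ := hN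
  obtain ⟨hPvalid, hPcover, hPnoroot⟩ := hP
  obtain ⟨⟨hne, hnodup, hmem, hchain⟩, -⟩ := hl
  obtain ⟨a0, ha0, ha0r⟩ := hfirst
  set f : ℕ → V × V := fun i => l.getD i a0 with hfdef
  have hfget : ∀ (i : ℕ) (h : i < l.length), f i = l.get ⟨i, h⟩ := by
    intro i h; exact List.getD_eq_get l a0 ⟨i, h⟩
  have hf0 : f 0 = a0 := by
    have h0 : 0 < l.length := List.length_pos_iff.mpr hne
    have := List.head?_eq_head hne
    rw [this] at ha0
    have h2 : l.head hne = a0 := Option.some_injective _ ha0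
    rw [hfget 0 h0, List.get_mk_zero h0, h2]
  have hfa : ∀ i, i < l.length → f i ∈ N.arcs ∧ (f i).1 ≠ N.root := by
    intro i h
    have hm : f i ∈ l := by rw [hfget i h]; exact List.get_mem l ⟨i, h⟩
    exact hmem _ hm
  have hinj : ∀ i j, i < l.length → j < l.length → f i = f j → i = j := by
    intro i j hi hj e
    rw [hfget i hi, hfget j hj] at e
    have := (hnodup.get_inj_iff).mp e
    exact congrArg Fin.val this
  have hch : ∀ i, i + 1 < l.length → (f i).1 = (f (i+1)).1 ∨ (f i).2 = (f (i+1)).2 := by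
    intro i h
    have := List.isChain_iff_getElem.mp hchain i (by omega)
    rw [hfget i (by omega), hfget (i+1) h]
    exact this
  -- degree bounds
  have deg_le : ∀ v ∈ N.verts, N.indeg v ≤ 2 ∧ N.outdeg v ≤ 2 := by
    intro v hv
    rcases hclass v hv with rfl | h | h | h
    · rw [hrin, hrout]; omega
    · rw [h.2.1, h.2.2]; omega
    · rw [h.2.1, h.2.2]; omega
    · rw [h.2.1, h.2.2]; omega
  have out_unique : ∀ v x y, N.outdeg v = 1 → (v, x) ∈ N.arcs → (v, y) ∈ N.arcs → x = y := by
    intro v x y h1 hx hy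
    obtain ⟨a, ha⟩ := Set.ncard_eq_one.mp h1
    have hxa : ((v, x) : V × V) ∈ {a ∈ N.arcs | a.1 = v} := ⟨hx, rfl⟩
    have hya : ((v, y) : V × V) ∈ {a ∈ N.arcs | a.1 = v} := ⟨hy, rfl⟩
    rw [ha, Set.mem_singleton_iff] at hxa hya
    have := hxa.trans hya.symm
    exact (Prod.mk.injEq _ _ _ _).mp this |>.2
  have out_exists : ∀ v, N.outdeg v = 1 → ∃ z, (v, z) ∈ N.arcs := by
    intro v h1
    obtain ⟨a, ha⟩ := Set.ncard_eq_one.mp h1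
    have haa : a ∈ {a ∈ N.arcs | a.1 = v} := by rw [ha]; exact rfl
    refine ⟨a.2, ?_⟩
    have hv2 : ((v, a.2) : V × V) = a := by rw [← haa.2]
    rw [hv2]
    exact haa.1
  have three_in : ∀ a b c : V × V, a ∈ N.arcs → b ∈ N.arcs → c ∈ N.arcs →
      a ≠ b → a ≠ c → b ≠ c → a.2 = b.2 → a.2 = c.2 → False := by
    intro a b c ha hb hc hab hac hbc h1 h2
    have hv : a.2 ∈ N.verts := (hends a ha).2
    have hsub : ({a, b, c} : Set (V × V)) ⊆ {x ∈ N.arcs | x.2 = a.2} := by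
      intro x hx
      rcases hx with rfl | rfl | rfl
      · exact ⟨ha, rfl⟩
      · exact ⟨hb, h1.symm⟩
      · exact ⟨hc, h2.symm⟩
    have hfin : ({x ∈ N.arcs | x.2 = a.2} : Set (V × V)).Finite :=
      hafin.subset (fun x hx => hx.1)
    have h3 : ({a, b, c} : Set (V × V)).ncard = 3 := by
      rw [Set.ncard_insert_of_notMem (by simp [hab, hac]), Set.ncard_pair hbc]
    have hle := Set.ncard_le_ncard hsub hfin
    rw [h3] at hle
    have hd := (deg_le _ hv).1
    have : N.indeg a.2 = ({x ∈ N.arcs | x.2 = a.2} : Set (V × V)).ncard := rfl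
    omega
  have three_out : ∀ a b c : V × V, a ∈ N.arcs → b ∈ N.arcs → c ∈ N.arcs →
      a ≠ b → a ≠ c → b ≠ c → a.1 = b.1 → a.1 = c.1 → False := by
    intro a b c ha hb hc hab hac hbc h1 h2
    have hv : a.1 ∈ N.verts := (hends a ha).1
    have hsub : ({a, b, c} : Set (V × V)) ⊆ {x ∈ N.arcs | x.1 = a.1} := by
      intro x hx
      rcases hx with rfl | rfl | rfl
      · exact ⟨ha, rfl⟩
      · exact ⟨hb, h1.symm⟩
      · exact ⟨hc, h2.symm⟩
    have hfin : ({x ∈ N.arcs | x.1 = a.1} : Set (V × V)).Finite :=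
      hafin.subset (fun x hx => hx.1)
    have h3 : ({a, b, c} : Set (V × V)).ncard = 3 := by
      rw [Set.ncard_insert_of_notMem (by simp [hab, hac]), Set.ncard_pair hbc]
    have hle := Set.ncard_le_ncard hsub hfin
    rw [h3] at hle
    have hd := (deg_le _ hv).2
    have : N.outdeg a.1 = ({x ∈ N.arcs | x.1 = a.1} : Set (V × V)).ncard := rfl
    omega
  have two_in_retic : ∀ (a b : V × V), a ∈ N.arcs → b ∈ N.arcs → a ≠ b →
      a.2 = b.2 → N.IsReticV a.2 ∧ (∀ c ∈ N.arcs, c.2 = a.2 → c = a ∨ c = b) := by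
    intro a b ha hb hab hh
    have hv : a.2 ∈ N.verts := (hends a ha).2
    have hsub : ({a, b} : Set (V × V)) ⊆ {x ∈ N.arcs | x.2 = a.2} := by
      intro x hx; rcases hx with rfl | rfl
      · exact ⟨ha, rfl⟩
      · exact ⟨hb, hh.symm⟩
    have hfin : ({x ∈ N.arcs | x.2 = a.2} : Set (V × V)).Finite :=
      hafin.subset (fun x hx => hx.1)
    have h2 : 2 ≤ N.indeg a.2 := by
      have := Set.ncard_le_ncard hsub hfin
      rw [Set.ncard_pair hab] at this
      exact this
    have hret : N.IsReticV a.2 := by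
      rcases hclass _ hv with he | h | h | h
      · rw [he] at h2; rw [hrin] at h2; omega
      · rw [h.2.1] at h2; omega
      · exact h
      · rw [h.2.1] at h2; omega
    refine ⟨hret, ?_⟩
    have heq : ({a, b} : Set (V × V)) = {x ∈ N.arcs | x.2 = a.2} := by
      apply Set.eq_of_subset_of_ncard_le hsub _ hfin
      have : N.indeg a.2 = ({x ∈ N.arcs | x.2 = a.2} : Set (V × V)).ncard := rfl
      rw [← this, hret.2.1, Set.ncard_pair hab]
    intro c hc hcc
    have : c ∈ ({a, b} : Set (V × V)) := by rw [heq]; exact ⟨hc, hcc⟩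
    exact this
  have two_out_tree : ∀ (a b : V × V), a ∈ N.arcs → b ∈ N.arcs → a ≠ b →
      a.1 = b.1 → (∀ c ∈ N.arcs, c.1 = a.1 → c = a ∨ c = b) := by
    intro a b ha hb hab hh
    have hv : a.1 ∈ N.verts := (hends a ha).1
    have hsub : ({a, b} : Set (V × V)) ⊆ {x ∈ N.arcs | x.1 = a.1} := by
      intro x hx; rcases hx with rfl | rfl
      · exact ⟨ha, rfl⟩
      · exact ⟨hb, hh.symm⟩
    have hfin : ({x ∈ N.arcs | x.1 = a.1} : Set (V × V)).Finite :=
      hafin.subset (fun x hx => hx.1)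
    have h2 : 2 ≤ N.outdeg a.1 := by
      have := Set.ncard_le_ncard hsub hfin
      rw [Set.ncard_pair hab] at this
      exact this
    have hout2 : N.outdeg a.1 = 2 := by
      rcases hclass _ hv with he | h | h | h
      · rw [he] at h2 ⊢; rw [hrout] at h2 ⊢; omega
      · exact h.2.2
      · rw [h.2.2] at h2; omega
      · rw [h.2.2] at h2; omega
    have heq : ({a, b} : Set (V × V)) = {x ∈ N.arcs | x.1 = a.1} := by
      apply Set.eq_of_subset_of_ncard_le hsub _ hfin
      have : N.outdeg a.1 = ({x ∈ N.arcs | x.1 = a.1} : Set (V × V)).ncard := rfl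
      rw [← this, hout2, Set.ncard_pair hab]
    intro c hc hcc
    have : c ∈ ({a, b} : Set (V × V)) := by rw [heq]; exact ⟨hc, hcc⟩
    exact this
  -- alternation
  have alt : ∀ i, i + 1 < l.length →
      ((Even i → (f i).2 = (f (i+1)).2) ∧ (Odd i → (f i).1 = (f (i+1)).1)) := by
    intro i
    induction i with
    | zero =>
      intro h
      constructor
      · intro _
        rcases hch 0 h with ht | hh
        · -- tails equal at reticulation a0.1 : heads equal by outdeg 1
          have hr : N.outdeg (f 0).1 = 1 := by rw [hf0]; exact ha0r.2.2
          have h0 : ((f 0).1, (f 0).2) ∈ N.arcs := by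
            rw [Prod.mk.eta]; exact (hfa 0 (by omega)).1
          have h1 : ((f 0).1, (f 1).2) ∈ N.arcs := by
            rw [ht, Prod.mk.eta]; exact (hfa 1 h).1
          exact out_unique _ _ _ hr h0 h1
        · exact hh
      · intro h'; simp [Nat.odd_iff] at h'
    | succ k ih =>
      intro h
      have hk : k + 1 < l.length := by omega
      have prev := ih hk
      rcases Nat.even_or_odd k with hke | hko
      · have hheads := prev.1 hke
        constructor
        · intro he; exact absurd hke (Nat.even_add_one.mp he)
        · intro _
          rcases hch (k+1) h with ht | hh
          · exact ht
          · exfalso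
            refine three_in (f k) (f (k+1)) (f (k+2)) (hfa k (by omega)).1
              (hfa (k+1) (by omega)).1 (hfa (k+2) (by omega)).1 ?_ ?_ ?_ hheads
              (hheads.trans hh)
            · intro e; have := hinj _ _ (by omega) (by omega) e; omega
            · intro e; have := hinj _ _ (by omega) (by omega) e; omega
            · intro e; have := hinj _ _ (by omega) (by omega) e; omega
      · have htails := prev.2 hko
        constructor
        · intro _
          rcases hch (k+1) h with ht | hh
          · exfalso
            refine three_out (f k) (f (k+1)) (f (k+2)) (hfa k (by omega)).1
              (hfa (k+1) (by omega)).1 (hfa (k+2) (by omega)).1 ?_ ?_ ?_ htails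
              (htails.trans ht)
            · intro e; have := hinj _ _ (by omega) (by omega) e; omega
            · intro e; have := hinj _ _ (by omega) (by omega) e; omega
            · intro e; have := hinj _ _ (by omega) (by omega) e; omega
          · exact hh
        · intro ho
          exfalso
          rcases hko with ⟨t, ht⟩
          rcases ho with ⟨s, hs⟩
          omega
  -- core case analysis
  have core : ∀ m, 2*m+3 ≤ l.length →
      (∃ z, Shape.retic ((f (2*m+1)).2) ((f (2*m+1)).1) z ((f (2*m+2)).2) ∈ P) ∨
      (∃ x y, Shape.retic ((f (2*m+1)).2) ((f (2*m)).1) x y ∈ P ∧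
        ((f (2*m)).1, y) ∈ N.arcs ∧ y ≠ (f (2*m+1)).2) := by
    intro m hm
    have hi0 : 2*m < l.length := by omega
    have hi1 : 2*m+1 < l.length := by omega
    have hi2 : 2*m+2 < l.length := by omega
    have hH : (f (2*m)).2 = (f (2*m+1)).2 := (alt (2*m) (by omega)).1 ⟨m, by ring⟩
    have hT : (f (2*m+1)).1 = (f (2*m+2)).1 := (alt (2*m+1) (by omega)).2 ⟨m, by ring⟩
    have hne01 : f (2*m) ≠ f (2*m+1) := fun e => by
      have := hinj _ _ hi0 hi1 e; omega
    have hne12 : f (2*m+1) ≠ f (2*m+2) := fun e => by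
      have := hinj _ _ hi1 hi2 e; omega
    obtain ⟨hretic, hinarcs⟩ :=
      two_in_retic (f (2*m)) (f (2*m+1)) (hfa _ hi0).1 (hfa _ hi1).1 hne01 hH
    rw [hH] at hretic hinarcs
    have hhroot : (f (2*m+1)).2 ≠ N.root := by
      intro e
      have := hretic.2.1
      rw [e, hrin] at this
      omega
    obtain ⟨z, hz⟩ := out_exists _ hretic.2.2
    obtain ⟨S, ⟨hSP, hSa⟩, huniq⟩ := hPcover ((f (2*m+1)).2, z) hz hhroot
    have hSsub := (hPvalid S hSP).1
    have hSval := (hPvalid S hSP).2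
    cases S with
    | cherry p x y =>
      exfalso
      have hpx : (p, x) ∈ N.arcs := hSsub (by simp [Shape.shapeArcs])
      have hpy : (p, y) ∈ N.arcs := hSsub (by simp [Shape.shapeArcs])
      simp only [Shape.shapeArcs, Set.mem_insert_iff, Set.mem_singleton_iff,
        Prod.mk.injEq] at hSa
      rcases hSa with ⟨e1, e2⟩ | ⟨e1, e2⟩
      · subst e1; exact hSval (out_unique _ _ _ hretic.2.2 hpx hpy)
      · subst e1; exact hSval (out_unique _ _ _ hretic.2.2 hpx hpy)
    | retic px py x y =>
      obtain ⟨hpxr, hpxpy, hpxy, hxy⟩ := hSval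
      have h1 : (px, x) ∈ N.arcs := hSsub (by simp [Shape.shapeArcs])
      have h2 : (py, px) ∈ N.arcs := hSsub (by simp [Shape.shapeArcs])
      have h3 : (py, y) ∈ N.arcs := hSsub (by simp [Shape.shapeArcs])
      simp only [Shape.shapeArcs, Set.mem_insert_iff, Set.mem_singleton_iff,
        Prod.mk.injEq] at hSa
      rcases hSa with ⟨e1, e2⟩ | ⟨e1, e2⟩ | ⟨e1, e2⟩
      · -- (h, z) = (px, x) : the good case
        subst e1
        rcases hinarcs (py, (f (2*m+1)).2) h2 rfl with hB | hA
        · -- backward case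
          right
          have hpy1 : py = (f (2*m)).1 := by rw [← hB]
          rw [hpy1] at hSP h3
          exact ⟨x, y, hSP, h3, fun e => hpxy e.symm⟩
        · -- forward case
          left
          have hpy1 : py = (f (2*m+1)).1 := by rw [← hA]
          have htwo := two_out_tree (f (2*m+1)) (f (2*m+2)) (hfa _ hi1).1
            (hfa _ hi2).1 hne12 hT
          have hy3 : (py, y) = f (2*m+1) ∨ (py, y) = f (2*m+2) := by
            refine htwo (py, y) h3 ?_
            rw [hpy1]
          rcases hy3 with e | e
          · exfalso
            have : y = (f (2*m+1)).2 := congrArg Prod.snd e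
            exact hpxy this.symm
          · have hy : y = (f (2*m+2)).2 := congrArg Prod.snd e
            rw [hpy1, hy] at hSP
            exact ⟨x, hSP⟩
      · -- (h, z) = (py, px) : two arcs out of h
        exfalso
        rw [← e1] at h2 h3
        exact hpxy (out_unique _ _ _ hretic.2.2 h2 h3)
      · -- (h, z) = (py, y)
        exfalso
        rw [← e1] at h2 h3
        exact hpxy (out_unique _ _ _ hretic.2.2 h2 h3)
  -- main induction
  have key : ∀ m, 2*m+3 ≤ l.length →
      ∃ z, Shape.retic ((f (2*m+1)).2) ((f (2*m+1)).1) z ((f (2*m+2)).2) ∈ P := by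
    intro m
    induction m with
    | zero =>
      intro hm
      rcases core 0 hm with hA | ⟨x, y, hSB, hya, hyh⟩
      · exact hA
      · exfalso
        have hr : N.outdeg (f 0).1 = 1 := by rw [hf0]; exact ha0r.2.2
        have h0a : ((f 0).1, (f 0).2) ∈ N.arcs := by
          rw [Prod.mk.eta]; exact (hfa 0 (by omega)).1
        have hy0 : y = (f 0).2 := out_unique _ _ _ hr hya h0a
        have hH0 : (f 0).2 = (f 1).2 := (alt 0 (by omega)).1 Even.zero
        exact hyh (hy0.trans hH0)
    | succ m ih =>
      intro hm
      rcases core (m+1) hm with hA | ⟨x, y, hSB, hya, hyh⟩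
      · exact hA
      · exfalso
        have e21 : 2*(m+1) = 2*m+2 := by ring
        have e22 : 2*(m+1)+1 = 2*m+3 := by ring
        rw [e22] at hSB hyh
        rw [e21] at hSB hya
        have hi1 : 2*m+1 < l.length := by omega
        have hi2 : 2*m+2 < l.length := by omega
        have hi3 : 2*m+3 < l.length := by omega
        have hT : (f (2*m+1)).1 = (f (2*m+2)).1 := (alt (2*m+1) (by omega)).2 ⟨m, by ring⟩
        have hH2 : (f (2*m+2)).2 = (f (2*m+3)).2 := (alt (2*m+2) (by omega)).1 ⟨m+1, by ring⟩
        have hne12 : f (2*m+1) ≠ f (2*m+2) := fun e => by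
          have := hinj _ _ hi1 hi2 e; omega
        have htwo := two_out_tree (f (2*m+1)) (f (2*m+2)) (hfa _ hi1).1
          (hfa _ hi2).1 hne12 hT
        have hyarc : ((f (2*m+1)).1, y) ∈ N.arcs := by rw [hT]; exact hya
        rcases htwo ((f (2*m+1)).1, y) hyarc rfl with e | e
        · -- S_B contains f (2m+1) : compare with IH shape
          obtain ⟨z', hT'⟩ := ih (by omega)
          have hmem1 : f (2*m+1) ∈
              (Shape.retic ((f (2*m+3)).2) ((f (2*m+2)).1) x y).shapeArcs := by
            simp only [Shape.shapeArcs, Set.mem_insert_iff, Set.mem_singleton_iff]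
            right; right
            rw [← e, hT]
          have hmem2 : f (2*m+1) ∈
              (Shape.retic ((f (2*m+1)).2) ((f (2*m+1)).1) z' ((f (2*m+2)).2)).shapeArcs := by
            simp [Shape.shapeArcs]
          obtain ⟨S0, hS0, hu⟩ := hPcover (f (2*m+1)) (hfa _ hi1).1 (hfa _ hi1).2
          have eq1 := hu _ ⟨hSB, hmem1⟩
          have eq2 := hu _ ⟨hT', hmem2⟩
          have heq := eq1.trans eq2.symm
          have hhead : (f (2*m+3)).2 = (f (2*m+1)).2 := by
            injection heq with ha hb hc hd
          refine three_in (f (2*m+1)) (f (2*m+2)) (f (2*m+3)) (hfa _ hi1).1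
            (hfa _ hi2).1 (hfa _ hi3).1 hne12 ?_ ?_ ?_ ?_
          · intro e'; have := hinj _ _ hi1 hi3 e'; omega
          · intro e'; have := hinj _ _ hi2 hi3 e'; omega
          · exact hhead.symm.trans hH2.symm
          · exact hhead.symm
        · have hy2 : y = (f (2*m+2)).2 := congrArg Prod.snd e
          exact hyh (hy2.trans hH2)
  -- conclude
  have hgeq : ∀ (i j : ℕ) (hi : i < l.length) (hj' : j < l.length), i = j →
      l.get ⟨i, hi⟩ = l.get ⟨j, hj'⟩ := by
    intro i j hi hj' e
    subst e
    rfl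
  intro j hj1 hj
  obtain ⟨m, rfl⟩ : ∃ m, j = m + 1 := ⟨j - 1, by omega⟩
  have hm : 2*m+3 ≤ l.length := by omega
  obtain ⟨z, hT⟩ := key m hm
  refine ⟨Shape.retic ((f (2*m+1)).2) ((f (2*m+1)).1) z ((f (2*m+2)).2), hT, trivial, ?_, ?_⟩
  · have hg : l.get ⟨2 * (m+1) - 1, by omega⟩ = f (2*m+1) :=
      (hgeq _ _ (by omega) (by omega) (by omega)).trans (hfget (2*m+1) (by omega)).symm
    rw [hg]
    simp [Shape.shapeArcs]
  · have hg : l.get ⟨2 * (m+1), by omega⟩ = f (2*m+2) :=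
      (hgeq _ _ (by omega) (by omega) (by omega)).trans (hfget (2*m+2) (by omega)).symm
    have hT2 : (f (2*m+1)).1 = (f (2*m+2)).1 := (alt (2*m+1) (by omega)).2 ⟨m, by ring⟩
    rw [hg, hT2]
    simp [Shape.shapeArcs]
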